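/- There exists ε > 0 such that no 4-user BMAC P satisfies, with mutually independent uniform binary inputs X[1], X[2], X[3], X[4] and output Y, both I(X[i], X[j]; Y) < ε and I(X[i], X[j]; Y, X[k], X[l]) > 2 − ε for all choices of distinct i, j, k, l in {1,2,3,4}; in other words, no sequence of 4-user BMACs can have uniform rate regions converging to the uniform matroid U_{2,4}. -/

import Mathlib

/-!
Polar codes for the m-user MAC (Abbe–Telatar), Statement 18:
There exists ε > 0 such that no 4-user BMAC P satisfies both
`I(X[i],X[j]; Y) < ε` and `I(X[i],X[j]; Y, X[k], X[l]) > 2 − ε` for all distinct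
`i,j,k,l`; i.e. no sequence of 4-user BMACs can have uniform rate regions converging to
the uniform matroid U_{2,4}.
-/

/-- Binary (base 2) Shannon entropy of a finitely supported distribution. -/
noncomputable def H2 {Ω : Type*} [Fintype Ω] (p : Ω → ℝ) : ℝ :=
  -∑ ω, p ω * Real.logb 2 (p ω)

open scoped Classical in
/-- Marginal distribution of the push-forward of `p` under `f`. -/
noncomputable def marg {Ω A : Type*} [Fintype Ω] (p : Ω → ℝ) (f : Ω → A) (a : A) : ℝ :=
  ∑ ω, if f ω = a then p ω else 0

/-- Mutual information (in bits) between `f` and `g` under the joint distribution `p`. -/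
noncomputable def mi {Ω A B : Type*} [Fintype Ω] [Fintype A] [Fintype B]
    (p : Ω → ℝ) (f : Ω → A) (g : Ω → B) : ℝ :=
  H2 (marg p f) + H2 (marg p g) - H2 (marg p fun ω => (f ω, g ω))

/-- `W` is a bona fide transition probability kernel (channel), `W x y = P(y | x)`. -/
def IsChannel {α Y : Type*} [Fintype Y] (W : α → Y → ℝ) : Prop :=
  (∀ x y, 0 ≤ W x y) ∧ ∀ x, ∑ y, W x y = 1

/-- Joint distribution of (input, output) of an `m`-user BMAC with i.i.d. uniform binary
inputs. -/
noncomputable def inputJoint {m : ℕ} {Y : Type*} (W : (Fin m → ZMod 2) → Y → ℝ) :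
    (Fin m → ZMod 2) × Y → ℝ :=
  fun q => W q.1 q.2 / 2 ^ m

/-- `I[J](P) = I(X[J]; Y, X[Jᶜ])` for the BMAC `W` with i.i.d. uniform binary inputs. -/
noncomputable def condMI {m : ℕ} {Y : Type*} [Fintype Y] (W : (Fin m → ZMod 2) → Y → ℝ)
    (J : Finset (Fin m)) : ℝ :=
  mi (inputJoint W) (fun q => fun i : {i // i ∈ J} => q.1 i.1)
    (fun q => (q.2, fun i : {i // i ∈ Jᶜ} => q.1 i.1))

/-- `I(X[J]; Y)` for the BMAC `W` with i.i.d. uniform binary inputs. -/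
noncomputable def miY {m : ℕ} {Y : Type*} [Fintype Y] (W : (Fin m → ZMod 2) → Y → ℝ)
    (J : Finset (Fin m)) : ℝ :=
  mi (inputJoint W) (fun q => fun i : {i // i ∈ J} => q.1 i.1) (fun q => q.2)

open Finset Real

section basics
variable {Ω A B : Type*} [Fintype Ω] [Fintype A] [Fintype B]

open scoped Classical

lemma marg_nonneg (p : Ω → ℝ) (hp : ∀ ω, 0 ≤ p ω) (f : Ω → A) (a : A) : 0 ≤ marg p f a := by
  unfold marg
  exact Finset.sum_nonneg fun ω _ => by split <;> simp [hp ω]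

lemma sum_marg (p : Ω → ℝ) (f : Ω → A) : ∑ a, marg p f a = ∑ ω, p ω := by
  unfold marg
  rw [Finset.sum_comm]
  exact Finset.sum_congr rfl fun ω _ => by simp

lemma le_marg (p : Ω → ℝ) (hp : ∀ ω, 0 ≤ p ω) (f : Ω → A) (ω0 : Ω) :
    p ω0 ≤ marg p f (f ω0) := by
  unfold marg
  have := Finset.single_le_sum (f := fun ω => if f ω = f ω0 then p ω else 0)
    (fun ω _ => by split <;> simp [hp ω]) (Finset.mem_univ ω0)
  simpa using this

lemma marg_marg (p : Ω → ℝ) (f : Ω → A) (g : A → B) :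
    marg (marg p f) g = marg p (g ∘ f) := by
  funext b
  unfold marg
  have step : ∀ a : A, (if g a = b then ∑ ω : Ω, if f ω = a then p ω else 0 else 0)
      = ∑ ω : Ω, if g a = b then (if f ω = a then p ω else 0) else 0 := by
    intro a; split
    · rfl
    · simp
  simp only [step]
  rw [Finset.sum_comm]
  refine Finset.sum_congr rfl fun ω _ => ?_
  simp only [Function.comp]
  by_cases h : g (f ω) = b
  · rw [Finset.sum_eq_single (f ω)]
    · simp [h]
    · intro a _ ha; simp [Ne.symm ha]
    · simp
  · rw [if_neg h, Finset.sum_eq_zero]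
    intro a _
    by_cases hfa : f ω = a
    · subst hfa; simp [h]
    · simp [hfa]

lemma sum_marg_mul (p : Ω → ℝ) (f : Ω → A) (φ : A → ℝ) :
    ∑ a, marg p f a * φ a = ∑ ω, p ω * φ (f ω) := by
  unfold marg
  simp only [Finset.sum_mul]
  rw [Finset.sum_comm]
  refine Finset.sum_congr rfl fun ω _ => ?_
  rw [Finset.sum_eq_single (f ω)]
  · simp
  · intro a _ ha; simp [Ne.symm ha]
  · simp

lemma marg_of_injective (p : Ω → ℝ) (f : Ω → A) (hf : Function.Injective f) (ω : Ω) :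
    marg p f (f ω) = p ω := by
  unfold marg
  rw [Finset.sum_eq_single ω]
  · simp
  · intro ω' _ h
    have : f ω' ≠ f ω := fun hh => h (hf hh)
    simp [this]
  · simp

lemma marg_eq_zero_of_not_mem (p : Ω → ℝ) (f : Ω → A) (a : A)
    (h : ∀ ω, f ω ≠ a) : marg p f a = 0 := by
  unfold marg
  exact Finset.sum_eq_zero fun ω _ => by simp [h ω]

lemma H2_marg_injective (p : Ω → ℝ) (f : Ω → A) (hf : Function.Injective f) :
    H2 (marg p f) = H2 p := by
  unfold H2
  congr 1
  rw [← Finset.sum_subset (Finset.subset_univ (Finset.image f Finset.univ))]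
  · rw [Finset.sum_image (fun a _ b _ h => hf h)]
    exact Finset.sum_congr rfl fun ω _ => by rw [marg_of_injective p f hf]
  · intro a _ ha
    have : ∀ ω, f ω ≠ a := by
      intro ω h; exact ha (Finset.mem_image.2 ⟨ω, Finset.mem_univ ω, h⟩)
    rw [marg_eq_zero_of_not_mem p f a this]
    simp

end basics
section entropy
open Finset Real
variable {Ω A B : Type*} [Fintype Ω] [Fintype A] [Fintype B]
open scoped Classical

lemma log_two_pos : (0:ℝ) < Real.log 2 := Real.log_pos (by norm_num)

lemma one_sub_inv_le_log {t : ℝ} (ht : 0 < t) : 1 - t⁻¹ ≤ Real.log t := by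
  have := Real.log_le_sub_one_of_pos (x := t⁻¹) (by positivity)
  rw [Real.log_inv] at this
  linarith

lemma one_sub_inv_lt_log {t : ℝ} (ht : 0 < t) (ht1 : t ≠ 1) : 1 - t⁻¹ < Real.log t := by
  have := Real.log_lt_sub_one_of_pos (x := t⁻¹) (by positivity) (by
    simpa [inv_eq_one] using ht1)
  rw [Real.log_inv] at this
  linarith

lemma gibbs_pt {r : ℝ} (hr : 0 ≤ r) :
    (r - 1/4) * (Real.log 2)⁻¹ ≤ r * Real.logb 2 (4 * r) ∧
    (r ≠ 1/4 → (r - 1/4) * (Real.log 2)⁻¹ < r * Real.logb 2 (4 * r)) := by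
  have hL := log_two_pos
  have hLinv : (0:ℝ) < (Real.log 2)⁻¹ := by positivity
  rcases eq_or_lt_of_le hr with h0 | h0
  · refine ⟨?_, fun _ => ?_⟩
    · rw [← h0]; simp; positivity
    · rw [← h0]; simp; positivity
  · have h4 : 0 < 4 * r := by linarith
    have hinv : r * (4*r)⁻¹ = 1/4 := by field_simp
    have hlogb : r * Real.logb 2 (4*r) = (r * Real.log (4*r)) * (Real.log 2)⁻¹ := by
      rw [Real.logb]; ring
    constructor
    · have h1 : r - 1/4 ≤ r * Real.log (4*r) := by
        have := mul_le_mul_of_nonneg_left (one_sub_inv_le_log h4) hr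
        nlinarith
      rw [hlogb]
      exact mul_le_mul_of_nonneg_right h1 hLinv.le
    · intro hne
      have h1 : r - 1/4 < r * Real.log (4*r) := by
        have := mul_lt_mul_of_pos_left
          (one_sub_inv_lt_log h4 (by intro h; apply hne; linarith)) h0
        nlinarith
      rw [hlogb]
      exact mul_lt_mul_of_pos_right h1 hLinv

/-- Max entropy on a 4-element space, with equality characterization. -/
lemma H2_le_two (hB : Fintype.card B = 4) (r : B → ℝ)
    (h0 : ∀ b, 0 ≤ r b) (h1 : ∑ b, r b = 1) :
    H2 r ≤ 2 ∧ (H2 r = 2 → ∀ b, r b = 1/4) := by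
  have hL := log_two_pos
  have hlog4 : Real.logb 2 4 = 2 := by
    rw [Real.logb, show (4:ℝ) = 2^(2:ℕ) by norm_num, Real.log_pow]
    field_simp
    norm_num
  have key : ∀ b, 2 * r b + r b * Real.logb 2 (r b) = r b * Real.logb 2 (4 * r b) := by
    intro b
    rcases eq_or_lt_of_le (h0 b) with h | h
    · rw [← h]; simp
    · rw [Real.logb_mul (by norm_num) (ne_of_gt h), hlog4]; ring
  have hsum : 2 - H2 r = ∑ b, r b * Real.logb 2 (4 * r b) := by
    have h2 : (2:ℝ) = ∑ b, 2 * r b := by rw [← Finset.mul_sum, h1, mul_one]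
    unfold H2
    rw [sub_neg_eq_add, ← Finset.sum_congr rfl (fun b _ => key b), Finset.sum_add_distrib, ← h2]
  have hlow : ∑ b, (r b - 1/4) * (Real.log 2)⁻¹ = 0 := by
    rw [← Finset.sum_mul]
    have : ∑ b, (r b - 1/4 : ℝ) = 0 := by
      rw [Finset.sum_sub_distrib, h1, Finset.sum_const, Finset.card_univ, hB]
      norm_num
    rw [this, zero_mul]
  have hge : 0 ≤ 2 - H2 r := by
    rw [hsum, ← hlow]
    exact Finset.sum_le_sum fun b _ => (gibbs_pt (h0 b)).1
  refine ⟨by linarith, fun heq b => ?_⟩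
  by_contra hne
  have hlt : ∑ b, (r b - 1/4) * (Real.log 2)⁻¹ < ∑ b, r b * Real.logb 2 (4 * r b) := by
    refine Finset.sum_lt_sum (fun c _ => (gibbs_pt (h0 c)).1) ⟨b, Finset.mem_univ b, ?_⟩
    exact (gibbs_pt (h0 b)).2 hne
  rw [hlow, ← hsum, heq] at hlt
  simp at hlt

end entropy
section pushforward
open Finset Real
variable {Ω A : Type*} [Fintype Ω] [Fintype A]
open scoped Classical

lemma H2_diff_eq (p : Ω → ℝ) (f : Ω → A) :
    H2 p - H2 (marg p f) =
      ∑ ω, p ω * (Real.logb 2 (marg p f (f ω)) - Real.logb 2 (p ω)) := by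
  unfold H2
  have : ∑ a, marg p f a * Real.logb 2 (marg p f a)
      = ∑ ω, p ω * Real.logb 2 (marg p f (f ω)) :=
    sum_marg_mul p f (fun a => Real.logb 2 (marg p f a))
  rw [Finset.sum_congr rfl (fun ω (_ : ω ∈ Finset.univ) =>
    (mul_sub (p ω) (Real.logb 2 (marg p f (f ω))) (Real.logb 2 (p ω)))),
    Finset.sum_sub_distrib, ← this]
  ring

lemma H2_push_term_nonneg (p : Ω → ℝ) (hp : ∀ ω, 0 ≤ p ω) (f : Ω → A) (ω : Ω) :
    0 ≤ p ω * (Real.logb 2 (marg p f (f ω)) - Real.logb 2 (p ω)) := by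
  rcases eq_or_lt_of_le (hp ω) with h | h
  · rw [← h]; simp
  · have h1 : p ω ≤ marg p f (f ω) := le_marg p hp f ω
    have h2 : Real.logb 2 (p ω) ≤ Real.logb 2 (marg p f (f ω)) :=
      Real.logb_le_logb_of_le (by norm_num) h h1
    nlinarith
  
lemma H2_marg_le (p : Ω → ℝ) (hp : ∀ ω, 0 ≤ p ω) (f : Ω → A) :
    H2 (marg p f) ≤ H2 p := by
  have := Finset.sum_nonneg (fun ω (_ : ω ∈ Finset.univ) => H2_push_term_nonneg p hp f ω)
  rw [← H2_diff_eq p f] at this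
  linarith

lemma injOn_of_H2_marg_eq (p : Ω → ℝ) (hp : ∀ ω, 0 ≤ p ω) (f : Ω → A)
    (heq : H2 (marg p f) = H2 p) :
    ∀ ω ω', 0 < p ω → 0 < p ω' → f ω = f ω' → ω = ω' := by
  have hz : ∑ ω, p ω * (Real.logb 2 (marg p f (f ω)) - Real.logb 2 (p ω)) = 0 := by
    rw [← H2_diff_eq p f, heq]; ring
  have hterm := (Finset.sum_eq_zero_iff_of_nonneg
    (fun ω (_ : ω ∈ Finset.univ) => H2_push_term_nonneg p hp f ω)).1 hz
  intro ω ω' hω hω' hf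
  by_contra hne
  -- then marg p f (f ω) ≥ p ω + p ω' > p ω
  have hlt : p ω < marg p f (f ω) := by
    have : marg p f (f ω) = p ω + ∑ ω'' ∈ Finset.univ.erase ω, (if f ω'' = f ω then p ω'' else 0) := by
      unfold marg
      rw [← Finset.add_sum_erase _ _ (Finset.mem_univ ω)]
      simp
    have h2 : (if f ω' = f ω then p ω' else 0) ≤ ∑ ω'' ∈ Finset.univ.erase ω, (if f ω'' = f ω then p ω'' else 0) := by
      refine Finset.single_le_sum (f := fun ω'' => if f ω'' = f ω then p ω'' else 0)
        (fun c _ => ?_) (Finset.mem_erase.2 ⟨fun h => hne h.symm, Finset.mem_univ ω'⟩)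
      split <;> simp [hp c]
    rw [if_pos hf.symm] at h2
    linarith [this]
  have hzω := hterm ω (Finset.mem_univ ω)
  have hlog : Real.logb 2 (p ω) < Real.logb 2 (marg p f (f ω)) :=
    Real.logb_lt_logb (b:=2) (by norm_num) hω hlt
  nlinarith
  
end pushforward
section chain
open Finset Real
variable {A B Y : Type*} [Fintype A] [Fintype B] [Fintype Y]
open scoped Classical

lemma marg_snd_apply (p : A × Y → ℝ) (y : Y) :
    marg p Prod.snd y = ∑ a, p (a, y) := by
  unfold marg
  rw [Fintype.sum_prod_type]
  exact Finset.sum_congr rfl fun a _ => by simp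

noncomputable def condDist [Nonempty A] (p : A × Y → ℝ) (y : Y) : A → ℝ :=
  if marg p Prod.snd y = 0 then (fun _ => (Fintype.card A : ℝ)⁻¹)
  else fun a => p (a, y) / marg p Prod.snd y

variable [Nonempty A]

lemma condDist_nonneg (p : A × Y → ℝ) (hp : ∀ ω, 0 ≤ p ω) (y : Y) (a : A) :
    0 ≤ condDist p y a := by
  unfold condDist
  split
  · positivity
  · have h1 : 0 ≤ marg p Prod.snd y := marg_nonneg p hp Prod.snd y
    exact div_nonneg (hp _) h1

lemma condDist_sum (p : A × Y → ℝ) (y : Y) :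
    marg p Prod.snd y ≠ 0 → ∑ a, condDist p y a = 1 := by
  intro h
  unfold condDist
  rw [if_neg h, ← Finset.sum_div, ← marg_snd_apply, div_self h]

lemma condDist_sum_one (p : A × Y → ℝ) (y : Y) :
    ∑ a, condDist p y a = 1 := by
  by_cases h : marg p Prod.snd y = 0
  · unfold condDist
    rw [if_pos h, Finset.sum_const, Finset.card_univ, nsmul_eq_mul]
    have : (0:ℝ) < Fintype.card A := by
      have := Fintype.card_pos (α := A); exact_mod_cast this
    field_simp
  · exact condDist_sum p y h

lemma p_eq_zero_of_marg_snd_zero (p : A × Y → ℝ) (hp : ∀ ω, 0 ≤ p ω) (y : Y)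
    (h : marg p Prod.snd y = 0) (a : A) : p (a, y) = 0 := by
  rw [marg_snd_apply] at h
  exact (Finset.sum_eq_zero_iff_of_nonneg (fun a _ => hp (a, y))).1 h a (Finset.mem_univ a)

lemma chainRule (p : A × Y → ℝ) (hp : ∀ ω, 0 ≤ p ω) :
    H2 p = H2 (marg p Prod.snd) + ∑ y, marg p Prod.snd y * H2 (condDist p y) := by
  have key : ∀ y, -(∑ a, p (a,y) * Real.logb 2 (p (a,y)))
      = -(marg p Prod.snd y * Real.logb 2 (marg p Prod.snd y))
        + marg p Prod.snd y * H2 (condDist p y) := by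
    intro y
    by_cases hy : marg p Prod.snd y = 0
    · have hz := p_eq_zero_of_marg_snd_zero p hp y hy
      rw [hy]
      simp [hz]
    · have hpos : 0 < marg p Prod.snd y :=
        lt_of_le_of_ne (marg_nonneg p hp Prod.snd y) (Ne.symm hy)
      have hcd : condDist p y = fun a => p (a, y) / marg p Prod.snd y := by
        unfold condDist; rw [if_neg hy]
      rw [hcd]
      unfold H2
      rw [mul_neg, Finset.mul_sum]
      dsimp only
      have expand : ∀ a, marg p Prod.snd y * (p (a,y) / marg p Prod.snd y
            * Real.logb 2 (p (a,y) / marg p Prod.snd y))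
          = p (a,y) * Real.logb 2 (p (a,y)) - p (a,y) * Real.logb 2 (marg p Prod.snd y) := by
        intro a
        rcases eq_or_lt_of_le (hp (a, y)) with h | h
        · rw [← h]; simp
        · rw [Real.logb_div (ne_of_gt h) hy]
          field_simp
      rw [Finset.sum_congr rfl (fun a _ => expand a), Finset.sum_sub_distrib,
        ← Finset.sum_mul, ← marg_snd_apply]
      ring
  unfold H2 at key ⊢
  rw [Fintype.sum_prod_type_right]
  rw [← Finset.sum_neg_distrib]
  rw [Finset.sum_congr rfl (fun y _ => key y), Finset.sum_add_distrib, Finset.sum_neg_distrib]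

lemma chain (p : A × Y → ℝ) (hp : ∀ ω, 0 ≤ p ω) (f : A → B) [Nonempty B] :
    H2 (marg p (fun ω => (f ω.1, ω.2))) = H2 (marg p Prod.snd)
      + ∑ y, marg p Prod.snd y * H2 (marg (condDist p y) f) := by
  set r := marg p (fun ω => (f ω.1, ω.2)) with hr
  have hrnn : ∀ ω, 0 ≤ r ω := fun ω => marg_nonneg p hp _ ω
  have h2 : marg r Prod.snd = marg p Prod.snd := by
    rw [hr, marg_marg]
    rfl
  have h1 := chainRule r hrnn
  rw [h1, h2]
  congr 1
  refine Finset.sum_congr rfl fun y _ => ?_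
  by_cases hy : marg p Prod.snd y = 0
  · rw [hy]; ring
  · congr 1
    have hcd : condDist r y = fun b => r (b, y) / marg p Prod.snd y := by
      unfold condDist; rw [h2, if_neg hy]
    have hrby : ∀ b, r (b, y) = ∑ a, if f a = b then p (a, y) else 0 := by
      intro b
      rw [hr]
      unfold marg
      rw [Fintype.sum_prod_type]
      refine Finset.sum_congr rfl fun a _ => ?_
      by_cases hfa : f a = b
      · simp [hfa, Prod.ext_iff]
      · rw [if_neg hfa]
        exact Finset.sum_eq_zero fun y' _ => by simp [Prod.ext_iff, hfa]
    have hcd' : condDist p y = fun a => p (a, y) / marg p Prod.snd y := by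
      unfold condDist; rw [if_neg hy]
    rw [hcd, hcd']
    congr 1
    funext b
    rw [hrby b, Finset.sum_div]
    unfold marg
    refine Finset.sum_congr rfl fun a _ => ?_
    dsimp only
    split
    · rfl
    · exact zero_div _

end chain
set_option maxRecDepth 10000 in
lemma mdsF : ∀ φ ψ : Fin 2 → Fin 2 → Fin 2,
    ¬ ((∀ a b b', φ a b = φ a b' → b = b') ∧
       (∀ a b b', ψ a b = ψ a b' → b = b') ∧
       (∀ a a' b, φ a b = φ a' b → a = a') ∧
       (∀ a a' b, ψ a b = ψ a' b → a = a') ∧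
       (∀ a b a' b', φ a b = φ a' b' → ψ a b = ψ a' b' → a = a' ∧ b = b')) := by
  decide
section special
open Finset Real
open scoped Classical

abbrev V4 := Fin 4 → ZMod 2

lemma card_V4 : Fintype.card V4 = 16 := by
  rw [Fintype.card_fun, ZMod.card, Fintype.card_fin]; norm_num

lemma card_pairfun {J : Finset (Fin 4)} (hJ : J.card = 2) :
    Fintype.card ({i // i ∈ J} → ZMod 2) = 4 := by
  rw [Fintype.card_fun, ZMod.card, Fintype.card_coe, hJ]; norm_num

/-- The fiber of the restriction map over any point has 4 elements (when `|J| = 2`). -/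
lemma fiber_card {J : Finset (Fin 4)} (hJ : J.card = 2) (a : {i // i ∈ J} → ZMod 2) :
    (Finset.univ.filter fun x : V4 => (fun i : {i // i ∈ J} => x i.1) = a).card = 4 := by
  have e : {x : V4 // (fun i : {i // i ∈ J} => x i.1) = a} ≃ ({i // i ∉ J} → ZMod 2) :=
    { toFun := fun x i => x.1 i.1
      invFun := fun g => ⟨fun i => if h : i ∈ J then a ⟨i, h⟩ else g ⟨i, h⟩, by
        funext i
        simp [i.2]⟩
      left_inv := by
        intro x
        ext i
        dsimp only
        split
        · rename_i h
          exact (congrFun x.2 ⟨i, h⟩).symm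
        · rfl
      right_inv := by
        intro g
        funext i
        simp [i.2] }
  have := Fintype.card_congr e
  rw [Fintype.card_subtype] at this
  rw [this, Fintype.card_fun, ZMod.card, Fintype.card_subtype_compl, Fintype.card_coe,
    Fintype.card_fin, hJ]
  norm_num

lemma H2_const_quarter {B : Type*} [Fintype B] (hB : Fintype.card B = 4) (r : B → ℝ)
    (h : ∀ b, r b = 1/4) : H2 r = 2 := by
  have hlog : Real.logb 2 (1/4 : ℝ) = -2 := by
    rw [show (1/4 : ℝ) = ((2:ℝ)^(2:ℕ))⁻¹ by norm_num, Real.logb, Real.log_inv, Real.log_pow]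
    have := log_two_pos
    field_simp
    norm_num
  unfold H2
  rw [Finset.sum_congr rfl (fun b _ => by rw [h b, hlog])]
  rw [Finset.sum_const, Finset.card_univ, hB, nsmul_eq_mul]
  norm_num

/-- The marginal of any two coordinates of the input is uniform. -/
lemma marg_rho_uniform {Y : Type*} [Fintype Y] (W : V4 → Y → ℝ) (hW : IsChannel W)
    {J : Finset (Fin 4)} (hJ : J.card = 2) (a : {i // i ∈ J} → ZMod 2) :
    marg (inputJoint W) (fun ω => (fun i : {i // i ∈ J} => ω.1 i.1)) a = 1/4 := by
  unfold marg inputJoint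
  rw [Fintype.sum_prod_type]
  beta_reduce
  simp only [Prod.fst, Prod.snd]
  have step : ∀ x : V4, (∑ y, if (fun i : {i // i ∈ J} => x i.1) = a then W x y / 2^4 else 0)
      = if (fun i : {i // i ∈ J} => x i.1) = a then (1:ℝ)/16 else 0 := by
    intro x
    split
    · rw [← Finset.sum_div, hW.2 x]; norm_num
    · exact Finset.sum_eq_zero fun y _ => rfl
  rw [Finset.sum_congr rfl fun x _ => step x]
  rw [Finset.sum_ite, Finset.sum_const, Finset.sum_const_zero, fiber_card hJ a]
  norm_num

/-- The set of 2-element subsets of `Fin 4`. -/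
def pairs : Finset (Finset (Fin 4)) := Finset.univ.filter fun J => J.card = 2

lemma card_pairs : pairs.card = 6 := by decide

/-- The deficiency functional on distributions over `V4`. -/
noncomputable def Fq (q : V4 → ℝ) : ℝ :=
  ∑ J ∈ pairs, ((2 - H2 (marg q (fun x => fun i : {i // i ∈ J} => x i.1)))
    + (H2 q - H2 (marg q (fun x => fun i : {i // i ∈ J} => x i.1))))

end special
section compactness
open Finset Real
open scoped Classical

lemma continuous_mul_logb : Continuous fun t : ℝ => t * Real.logb 2 t := by
  have h := Real.continuous_mul_log.div_const (Real.log 2)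
  simpa [Real.logb, mul_div_assoc] using h

lemma continuous_H2_marg {Ω A : Type*} [Fintype Ω] [Fintype A] (f : Ω → A) :
    Continuous fun p : Ω → ℝ => H2 (marg p f) := by
  unfold H2
  apply Continuous.neg
  apply continuous_finset_sum
  intro a _
  have hm : Continuous fun p : Ω → ℝ => marg p f a := by
    unfold marg
    apply continuous_finset_sum
    intro ω _
    by_cases h : f ω = a
    · simp only [if_pos h]
      exact continuous_apply ω
    · simp only [if_neg h]
      exact continuous_const
  exact continuous_mul_logb.comp hm

lemma continuous_H2 {Ω : Type*} [Fintype Ω] :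
    Continuous fun p : Ω → ℝ => H2 p := by
  unfold H2
  apply Continuous.neg
  apply continuous_finset_sum
  intro ω _
  exact continuous_mul_logb.comp (continuous_apply ω)

lemma continuous_Fq : Continuous Fq := by
  unfold Fq
  apply continuous_finset_sum
  intro J _
  exact (continuous_const.sub (continuous_H2_marg _)).add
    (continuous_H2.sub (continuous_H2_marg _))

lemma exists_Fq_min : ∃ q0 ∈ stdSimplex ℝ V4, ∀ q ∈ stdSimplex ℝ V4, Fq q0 ≤ Fq q := by
  have hne : (stdSimplex ℝ V4).Nonempty := by
    refine ⟨fun _ => 1/16, fun x => by norm_num, ?_⟩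
    rw [Finset.sum_const, Finset.card_univ, card_V4, nsmul_eq_mul]
    norm_num
  obtain ⟨q0, hq0, hmin⟩ := (isCompact_stdSimplex ℝ V4).exists_isMinOn hne continuous_Fq.continuousOn
  exact ⟨q0, hq0, isMinOn_iff.1 hmin⟩

lemma Fq_pos (q : V4 → ℝ) (hq : q ∈ stdSimplex ℝ V4) : 0 < Fq q := by
  obtain ⟨h0, h1⟩ := hq
  rcases lt_or_ge 0 (Fq q) with h | h
  · exact h
  exfalso
  have hterm : ∀ J ∈ pairs, 0 ≤ (2 - H2 (marg q (fun x => fun i : {i // i ∈ J} => x i.1)))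
      + (H2 q - H2 (marg q (fun x => fun i : {i // i ∈ J} => x i.1))) := by
    intro J hJp
    have hJ2 : J.card = 2 := (Finset.mem_filter.1 hJp).2
    have hle := (H2_le_two (card_pairfun hJ2)
      (marg q (fun x => fun i : {i // i ∈ J} => x i.1))
      (marg_nonneg q h0 _) (by rw [sum_marg]; exact h1)).1
    have hpush := H2_marg_le q h0 (fun x => fun i : {i // i ∈ J} => x i.1)
    linarith
  have hFq0 : Fq q = 0 := le_antisymm h (Finset.sum_nonneg hterm)
  have hzero := (Finset.sum_eq_zero_iff_of_nonneg hterm).1 hFq0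
  have hJfacts : ∀ J ∈ pairs,
      (∀ a, marg q (fun x => fun i : {i // i ∈ J} => x i.1) a = 1/4) ∧
      (∀ x x', 0 < q x → 0 < q x' →
        (fun i : {i // i ∈ J} => x i.1) = (fun i : {i // i ∈ J} => x' i.1) → x = x') := by
    intro J hJp
    have hJ2 : J.card = 2 := (Finset.mem_filter.1 hJp).2
    have hle := H2_le_two (card_pairfun hJ2) (marg q (fun x => fun i : {i // i ∈ J} => x i.1))
      (marg_nonneg q h0 _) (by rw [sum_marg]; exact h1)
    have hpush := H2_marg_le q h0 (fun x => fun i : {i // i ∈ J} => x i.1)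
    have hz := hzero J hJp
    have hA2 : H2 (marg q (fun x => fun i : {i // i ∈ J} => x i.1)) = 2 := by linarith
    have hAB : H2 (marg q (fun x => fun i : {i // i ∈ J} => x i.1)) = H2 q := by linarith
    exact ⟨hle.2 hA2, fun x x' hx hx' hf =>
      injOn_of_H2_marg_eq q h0 _ hAB x x' hx hx' hf⟩
  -- extract representatives
  have hJ0p : ({0,1} : Finset (Fin 4)) ∈ pairs := by decide
  have hsel : ∀ a b : ZMod 2, ∃ x : V4, 0 < q x ∧
      (fun i : {i // i ∈ ({0,1} : Finset (Fin 4))} => x i.1)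
        = (fun i => if i.1 = 0 then a else b) := by
    intro a b
    have hun := (hJfacts _ hJ0p).1 (fun i => if i.1 = 0 then a else b)
    have hne : marg q (fun x => fun i : {i // i ∈ ({0,1} : Finset (Fin 4))} => x i.1)
        (fun i => if i.1 = 0 then a else b) ≠ 0 := by rw [hun]; norm_num
    obtain ⟨x, _, hx⟩ := Finset.exists_ne_zero_of_sum_ne_zero hne
    by_cases hc : (fun i : {i // i ∈ ({0,1} : Finset (Fin 4))} => x i.1)
        = (fun i => if i.1 = 0 then a else b)
    · refine ⟨x, ?_, hc⟩
      rw [if_pos hc] at hx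
      exact lt_of_le_of_ne (h0 x) (Ne.symm hx)
    · rw [if_neg hc] at hx
      exact absurd rfl hx
  choose X hXpos hXeq using hsel
  have hX0 : ∀ a b, X a b 0 = a := by
    intro a b
    have := congrFun (hXeq a b) ⟨0, by decide⟩
    simpa using this
  have hX1 : ∀ a b, X a b 1 = b := by
    intro a b
    have := congrFun (hXeq a b) ⟨1, by decide⟩
    simpa using this
  have hinj : ∀ J ∈ pairs, ∀ x x' : V4, 0 < q x → 0 < q x' →
      (∀ i ∈ J, x i = x' i) → x = x' := by
    intro J hJp x x' hx hx' hcoord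
    exact (hJfacts J hJp).2 x x' hx hx' (funext fun i => hcoord i.1 i.2)
  set φ : ZMod 2 → ZMod 2 → ZMod 2 := fun a b => X a b 2 with hφ
  set ψ : ZMod 2 → ZMod 2 → ZMod 2 := fun a b => X a b 3 with hψ
  have C02 : ∀ a b b', φ a b = φ a b' → b = b' := by
    intro a b b' h
    have hx := hinj {0,2} (by decide) (X a b) (X a b') (hXpos a b) (hXpos a b') ?_
    · rw [← hX1 a b, hx, hX1]
    · intro i hi
      fin_cases hi
      · rw [hX0, hX0]
      · exact h
  have C03 : ∀ a b b', ψ a b = ψ a b' → b = b' := by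
    intro a b b' h
    have hx := hinj {0,3} (by decide) (X a b) (X a b') (hXpos a b) (hXpos a b') ?_
    · rw [← hX1 a b, hx, hX1]
    · intro i hi
      fin_cases hi
      · rw [hX0, hX0]
      · exact h
  have C12 : ∀ a a' b, φ a b = φ a' b → a = a' := by
    intro a a' b h
    have hx := hinj {1,2} (by decide) (X a b) (X a' b) (hXpos a b) (hXpos a' b) ?_
    · rw [← hX0 a b, hx, hX0]
    · intro i hi
      fin_cases hi
      · rw [hX1, hX1]
      · exact h
  have C13 : ∀ a a' b, ψ a b = ψ a' b → a = a' := by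
    intro a a' b h
    have hx := hinj {1,3} (by decide) (X a b) (X a' b) (hXpos a b) (hXpos a' b) ?_
    · rw [← hX0 a b, hx, hX0]
    · intro i hi
      fin_cases hi
      · rw [hX1, hX1]
      · exact h
  have C23 : ∀ a b a' b', φ a b = φ a' b' → ψ a b = ψ a' b' → a = a' ∧ b = b' := by
    intro a b a' b' hf hg
    have hx := hinj {2,3} (by decide) (X a b) (X a' b') (hXpos a b) (hXpos a' b') ?_
    · constructor
      · rw [← hX0 a b, hx, hX0]
      · rw [← hX1 a b, hx, hX1]
    · intro i hi
      fin_cases hi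
      · exact hf
      · exact hg
  exact mdsF φ ψ ⟨C02, C03, C12, C13, C23⟩

end compactness
section formulas
open Finset Real
open scoped Classical
variable {Y : Type*} [Fintype Y]

lemma inputJoint_nonneg (W : V4 → Y → ℝ) (hW : IsChannel W) :
    ∀ ω, 0 ≤ inputJoint W ω := fun ω => div_nonneg (hW.1 _ _) (by positivity)

lemma miY_eq (W : V4 → Y → ℝ) (hW : IsChannel W) {J : Finset (Fin 4)} (hJ : J.card = 2) :
    miY W J = 2 - ∑ y, marg (inputJoint W) Prod.snd y *
      H2 (marg (condDist (inputJoint W) y) (fun x => fun i : {i // i ∈ J} => x i.1)) := by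
  have hp := inputJoint_nonneg W hW
  have t1 : H2 (marg (inputJoint W) (fun ω => (fun i : {i // i ∈ J} => ω.1 i.1))) = 2 :=
    H2_const_quarter (card_pairfun hJ) _ (marg_rho_uniform W hW hJ)
  have t2 := chain (inputJoint W) hp (fun x => fun i : {i // i ∈ J} => x i.1)
  show H2 (marg (inputJoint W) (fun ω : V4 × Y => (fun i : {i // i ∈ J} => ω.1 i.1)))
      + H2 (marg (inputJoint W) Prod.snd)
      - H2 (marg (inputJoint W)
          (fun ω : V4 × Y => ((fun x => fun i : {i // i ∈ J} => x i.1) ω.1, ω.2)))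
      = _
  rw [t1, t2]
  ring

lemma condMI_eq (W : V4 → Y → ℝ) (hW : IsChannel W) {J : Finset (Fin 4)} (hJ : J.card = 2) :
    condMI W J = 2 - ((∑ y, marg (inputJoint W) Prod.snd y * H2 (condDist (inputJoint W) y))
      - ∑ y, marg (inputJoint W) Prod.snd y *
          H2 (marg (condDist (inputJoint W) y) (fun x => fun i : {i // i ∈ Jᶜ} => x i.1))) := by
  have hp := inputJoint_nonneg W hW
  have t1 : H2 (marg (inputJoint W) (fun ω => (fun i : {i // i ∈ J} => ω.1 i.1))) = 2 :=
    H2_const_quarter (card_pairfun hJ) _ (marg_rho_uniform W hW hJ)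
  have hinj3 : Function.Injective (fun ω : V4 × Y =>
      ((fun i : {i // i ∈ J} => ω.1 i.1), (ω.2, fun i : {i // i ∈ Jᶜ} => ω.1 i.1))) := by
    intro ω ω' hh
    simp only [Prod.mk.injEq] at hh
    refine Prod.ext_iff.mpr ⟨?_, hh.2.1⟩
    funext i
    by_cases hi : i ∈ J
    · exact congrFun hh.1 ⟨i, hi⟩
    · exact congrFun hh.2.2 ⟨i, Finset.mem_compl.mpr hi⟩
  have t3 : H2 (marg (inputJoint W) (fun ω : V4 × Y =>
      ((fun i : {i // i ∈ J} => ω.1 i.1), (ω.2, fun i : {i // i ∈ Jᶜ} => ω.1 i.1))))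
      = H2 (inputJoint W) := H2_marg_injective _ _ hinj3
  have t4 := chainRule (inputJoint W) hp
  have t5 : H2 (marg (inputJoint W)
        (fun q : V4 × Y => (q.2, fun i : {i // i ∈ Jᶜ} => q.1 i.1)))
      = H2 (marg (inputJoint W)
        (fun ω : V4 × Y => ((fun x => fun i : {i // i ∈ Jᶜ} => x i.1) ω.1, ω.2))) := by
    conv_lhs => rw [← H2_marg_injective
      (marg (inputJoint W) (fun q : V4 × Y => (q.2, fun i : {i // i ∈ Jᶜ} => q.1 i.1)))
      Prod.swap Prod.swap_injective]
    rw [marg_marg]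
    rfl
  have t6 := chain (inputJoint W) hp (fun x => fun i : {i // i ∈ Jᶜ} => x i.1)
  show H2 (marg (inputJoint W) (fun ω : V4 × Y => (fun i : {i // i ∈ J} => ω.1 i.1)))
      + H2 (marg (inputJoint W) (fun q : V4 × Y => (q.2, fun i : {i // i ∈ Jᶜ} => q.1 i.1)))
      - H2 (marg (inputJoint W) (fun ω : V4 × Y =>
          ((fun i : {i // i ∈ J} => ω.1 i.1), (ω.2, fun i : {i // i ∈ Jᶜ} => ω.1 i.1))))
      = _
  rw [t1, t3, t4, t5, t6]
  ring

end formulas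
open Finset Real in
open scoped Classical in
theorem statement18 :
    ∃ ε : ℝ, 0 < ε ∧
      ∀ (Y : Type) [Fintype Y] (W : (Fin 4 → ZMod 2) → Y → ℝ), IsChannel W →
        ¬ (∀ i j k l : Fin 4, i ≠ j → i ≠ k → i ≠ l → j ≠ k → j ≠ l → k ≠ l →
            miY W {i, j} < ε ∧ 2 - ε < condMI W {i, j}) := by
  obtain ⟨q0, hq0S, hq0min⟩ := exists_Fq_min
  have hδ : 0 < Fq q0 := Fq_pos q0 hq0S
  refine ⟨Fq q0 / 12, by positivity, ?_⟩
  intro Y _ W hW hall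
  have hp : ∀ ω, 0 ≤ inputJoint W ω := inputJoint_nonneg W hW
  have hp1 : ∑ ω, inputJoint W ω = 1 := by
    unfold inputJoint
    rw [Fintype.sum_prod_type]
    rw [Finset.sum_congr rfl (fun x (_ : x ∈ Finset.univ) => by
      rw [← Finset.sum_div, hW.2 x])]
    rw [Finset.sum_const, Finset.card_univ, card_V4, nsmul_eq_mul]
    norm_num
  have hPnn : ∀ y, 0 ≤ marg (inputJoint W) Prod.snd y := marg_nonneg _ hp Prod.snd
  have hPsum : ∑ y, marg (inputJoint W) Prod.snd y = 1 := by rw [sum_marg]; exact hp1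
  have hqS : ∀ y, condDist (inputJoint W) y ∈ stdSimplex ℝ V4 := fun y =>
    ⟨condDist_nonneg _ hp y, condDist_sum_one _ y⟩
  have hlb : Fq q0 ≤ ∑ y, marg (inputJoint W) Prod.snd y * Fq (condDist (inputJoint W) y) := by
    calc Fq q0 = ∑ y, marg (inputJoint W) Prod.snd y * Fq q0 := by
          rw [← Finset.sum_mul, hPsum, one_mul]
      _ ≤ _ := Finset.sum_le_sum fun y _ =>
          mul_le_mul_of_nonneg_left (hq0min _ (hqS y)) (hPnn y)
  have hswap : ∑ y, marg (inputJoint W) Prod.snd y * Fq (condDist (inputJoint W) y)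
      = ∑ J ∈ pairs, ∑ y, marg (inputJoint W) Prod.snd y *
          ((2 - H2 (marg (condDist (inputJoint W) y) (fun x => fun i : {i // i ∈ J} => x i.1)))
            + (H2 (condDist (inputJoint W) y)
              - H2 (marg (condDist (inputJoint W) y)
                  (fun x => fun i : {i // i ∈ J} => x i.1)))) := by
    unfold Fq
    rw [Finset.sum_congr rfl (fun y (_ : y ∈ Finset.univ) => Finset.mul_sum _ _ _)]
    rw [Finset.sum_comm]
  have hJb : ∀ J ∈ pairs, ∑ y, marg (inputJoint W) Prod.snd y *
      ((2 - H2 (marg (condDist (inputJoint W) y) (fun x => fun i : {i // i ∈ J} => x i.1)))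
        + (H2 (condDist (inputJoint W) y)
          - H2 (marg (condDist (inputJoint W) y)
              (fun x => fun i : {i // i ∈ J} => x i.1))))
      < 2 * (Fq q0 / 12) := by
    intro J hJp
    have hJ2 : J.card = 2 := (Finset.mem_filter.1 hJp).2
    have hJc2 : Jᶜ.card = 2 := by
      rw [Finset.card_compl, hJ2]
      rfl
    obtain ⟨i, j, hij, hJij⟩ := Finset.card_eq_two.1 hJ2
    obtain ⟨k, l, hkl, hJckl⟩ := Finset.card_eq_two.1 hJc2
    have hiJ : i ∈ J := by rw [hJij]; exact Finset.mem_insert_self i {j}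
    have hjJ : j ∈ J := by rw [hJij]; exact Finset.mem_insert_of_mem (Finset.mem_singleton_self j)
    have hkJ : k ∉ J := by
      have : k ∈ Jᶜ := by rw [hJckl]; exact Finset.mem_insert_self k {l}
      exact Finset.mem_compl.1 this
    have hlJ : l ∉ J := by
      have : l ∈ Jᶜ := by rw [hJckl]; exact Finset.mem_insert_of_mem (Finset.mem_singleton_self l)
      exact Finset.mem_compl.1 this
    have h1 := (hall i j k l hij (fun h => hkJ (h ▸ hiJ)) (fun h => hlJ (h ▸ hiJ))
      (fun h => hkJ (h ▸ hjJ)) (fun h => hlJ (h ▸ hjJ)) hkl).1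
    have h2 := (hall k l i j hkl (fun h => hkJ (h.symm ▸ hiJ)) (fun h => hkJ (h.symm ▸ hjJ))
      (fun h => hlJ (h.symm ▸ hiJ)) (fun h => hlJ (h.symm ▸ hjJ)) hij).2
    rw [← hJij, miY_eq W hW hJ2] at h1
    rw [← hJckl, condMI_eq W hW hJc2, compl_compl] at h2
    have hexp : ∑ y, marg (inputJoint W) Prod.snd y *
        ((2 - H2 (marg (condDist (inputJoint W) y) (fun x => fun i : {i // i ∈ J} => x i.1)))
          + (H2 (condDist (inputJoint W) y)
            - H2 (marg (condDist (inputJoint W) y)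
                (fun x => fun i : {i // i ∈ J} => x i.1))))
        = (2 * (∑ y, marg (inputJoint W) Prod.snd y)
            - ∑ y, marg (inputJoint W) Prod.snd y *
                H2 (marg (condDist (inputJoint W) y) (fun x => fun i : {i // i ∈ J} => x i.1)))
          + ((∑ y, marg (inputJoint W) Prod.snd y * H2 (condDist (inputJoint W) y))
            - ∑ y, marg (inputJoint W) Prod.snd y *
                H2 (marg (condDist (inputJoint W) y)
                  (fun x => fun i : {i // i ∈ J} => x i.1))) := by
      have e1 : (∑ y, marg (inputJoint W) Prod.snd y *
          ((2 - H2 (marg (condDist (inputJoint W) y) (fun x => fun i : {i // i ∈ J} => x i.1)))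
            + (H2 (condDist (inputJoint W) y)
              - H2 (marg (condDist (inputJoint W) y)
                  (fun x => fun i : {i // i ∈ J} => x i.1)))))
          = ∑ y, ((2 * marg (inputJoint W) Prod.snd y
              - marg (inputJoint W) Prod.snd y *
                  H2 (marg (condDist (inputJoint W) y) (fun x => fun i : {i // i ∈ J} => x i.1)))
            + (marg (inputJoint W) Prod.snd y * H2 (condDist (inputJoint W) y)
              - marg (inputJoint W) Prod.snd y *
                  H2 (marg (condDist (inputJoint W) y)
                    (fun x => fun i : {i // i ∈ J} => x i.1)))) :=
        Finset.sum_congr rfl fun y _ => by ring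
      rw [e1, Finset.sum_add_distrib, Finset.sum_sub_distrib, Finset.sum_sub_distrib,
        ← Finset.mul_sum]
    rw [hexp, hPsum]
    linarith
  have hub := Finset.sum_lt_sum_of_nonempty
    (⟨({0,1} : Finset (Fin 4)), by decide⟩ : pairs.Nonempty) hJb
  rw [Finset.sum_const, card_pairs, nsmul_eq_mul] at hub
  rw [hswap] at hlb
  linarith
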